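/- Let n ∈ ℕ and let g be a Lie subalgebra of n_n(k) that is isomorphic (as a Lie algebra over k) to L_{6,9}. Then n ≥ 6. -/

import Mathlib

namespace L69aux

variable {k : Type*} [Field k]

abbrev M5 (k : Type*) [Field k] := Matrix (Fin 5) (Fin 5) k

/-- strictly upper triangular -/
def SU (X : M5 k) : Prop := ∀ i j : Fin 5, j ≤ i → X i j = 0

lemma su_mul {X Y : M5 k} (hX : SU X) (hY : SU Y) : SU (X*Y) := by
  intro i j hij
  rw [Matrix.mul_apply]
  apply Finset.sum_eq_zero
  intro l _
  by_cases h : l ≤ i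
  · rw [hX i l h, zero_mul]
  · push_neg at h
    rw [hY l j (hij.trans h.le), mul_zero]

lemma su_sub {X Y : M5 k} (hX : SU X) (hY : SU Y) : SU (X - Y) := by
  intro i j hij; simp [Matrix.sub_apply, hX i j hij, hY i j hij]

lemma su_smul (s : k) {X : M5 k} (hX : SU X) : SU (s • X) := by
  intro i j hij; simp [Matrix.smul_apply, hX i j hij]

lemma su_neg {X : M5 k} (hX : SU X) : SU (-X) := by
  intro i j hij; simp [Matrix.neg_apply, hX i j hij]

lemma su_comm {X Y : M5 k} (hX : SU X) (hY : SU Y) : SU (X*Y - Y*X) :=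
  su_sub (su_mul hX hY) (su_mul hY hX)

/-- the flip (anti-transpose, negated) automorphism of n₅ -/
def flp (X : M5 k) : M5 k := Matrix.of fun i j => -(X (Fin.rev j) (Fin.rev i))

lemma flp_apply (X : M5 k) (i j : Fin 5) : flp X i j = -(X (Fin.rev j) (Fin.rev i)) := rfl

lemma flp_add (X Y : M5 k) : flp (X + Y) = flp X + flp Y := by
  ext i j; simp [flp]; ring

lemma flp_smul (s : k) (X : M5 k) : flp (s • X) = s • flp X := by
  ext i j; simp [flp]

lemma flp_zero : flp (0 : M5 k) = 0 := by ext i j; simp [flp]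

lemma flp_flip (X : M5 k) : flp (flp X) = X := by
  ext i j; simp [flp]

lemma flp_mul (X Y : M5 k) : flp X * flp Y = -(flp (Y*X)) := by
  ext i j
  simp only [Matrix.mul_apply, flp, Matrix.of_apply, Matrix.neg_apply, neg_mul_neg, neg_neg]
  calc ∑ l, X (Fin.rev l) (Fin.rev i) * Y (Fin.rev j) (Fin.rev l)
      = ∑ l, Y (Fin.rev j) (Fin.rev l) * X (Fin.rev l) (Fin.rev i) :=
        Finset.sum_congr rfl fun l _ => mul_comm _ _
    _ = ∑ l, Y (Fin.rev j) l * X l (Fin.rev i) :=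
        Fintype.sum_equiv (Fin.revPerm) _ _ (fun l => by simp)

lemma flp_comm (X Y : M5 k) : flp X * flp Y - flp Y * flp X = flp (X*Y - Y*X) := by
  rw [flp_mul, flp_mul]
  ext i j
  simp [flp]
  try ring

lemma flp_su {X : M5 k} (hX : SU X) : SU (flp X) := by
  intro i j hij
  simp [flp, hX (Fin.rev j) (Fin.rev i) (Fin.rev_le_rev.mpr hij)]

lemma commz_sub {X Y Z : M5 k} (h1 : X*Z - Z*X = 0) (h2 : Y*Z - Z*Y = 0) :
    (X - Y)*Z - Z*(X - Y) = 0 := by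
  have h : (X - Y)*Z - Z*(X - Y) = (X*Z - Z*X) - (Y*Z - Z*Y) := by noncomm_ring
  rw [h, h1, h2, sub_zero]

lemma commz_smul (s : k) {X Z : M5 k} (h : X*Z - Z*X = 0) : (s•X)*Z - Z*(s•X) = 0 := by
  have e : (s•X)*Z - Z*(s•X) = s•(X*Z - Z*X) := by
    rw [smul_mul_assoc, mul_smul_comm, smul_sub]
  rw [e, h, smul_zero]

lemma commz_smul_right (s : k) {X Z : M5 k} (h : X*Z - Z*X = 0) : X*(s•Z) - (s•Z)*X = 0 := by
  have e : X*(s•Z) - (s•Z)*X = s•(X*Z - Z*X) := by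
    rw [smul_mul_assoc, mul_smul_comm, smul_sub]
  rw [e, h, smul_zero]

lemma commz_add_right {X Z W : M5 k} (h1 : X*Z - Z*X = 0) (h2 : X*W - W*X = 0) :
    X*(Z+W) - (Z+W)*X = 0 := by
  have e : X*(Z+W) - (Z+W)*X = (X*Z - Z*X) + (X*W - W*X) := by noncomm_ring
  rw [e, h1, h2, add_zero]

lemma mulz {x y : k} (h : x * y = 0) (hy : y ≠ 0) : x = 0 :=
  (mul_eq_zero.mp h).resolve_right hy

lemma mulz' {x y : k} (h : x * y = 0) (hx : x ≠ 0) : y = 0 :=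
  (mul_eq_zero.mp h).resolve_left hx

lemma ce01 (X Y : M5 k) (hX : SU X) (hY : SU Y) :
    (X*Y - Y*X) 0 1 = 0 := by
  simp only [Matrix.sub_apply, Matrix.mul_apply, Fin.sum_univ_five,
    hX 0 0 (by decide), hY 0 0 (by decide), hY 1 1 (by decide), hX 1 1 (by decide), hY 2 1 (by decide), hX 2 1 (by decide), hY 3 1 (by decide), hX 3 1 (by decide), hY 4 1 (by decide), hX 4 1 (by decide)]
  ring

lemma ce12 (X Y : M5 k) (hX : SU X) (hY : SU Y) :
    (X*Y - Y*X) 1 2 = 0 := by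
  simp only [Matrix.sub_apply, Matrix.mul_apply, Fin.sum_univ_five,
    hX 1 0 (by decide), hY 1 0 (by decide), hX 1 1 (by decide), hY 1 1 (by decide), hY 2 2 (by decide), hX 2 2 (by decide), hY 3 2 (by decide), hX 3 2 (by decide), hY 4 2 (by decide), hX 4 2 (by decide)]
  ring

lemma ce23 (X Y : M5 k) (hX : SU X) (hY : SU Y) :
    (X*Y - Y*X) 2 3 = 0 := by
  simp only [Matrix.sub_apply, Matrix.mul_apply, Fin.sum_univ_five,
    hX 2 0 (by decide), hY 2 0 (by decide), hX 2 1 (by decide), hY 2 1 (by decide), hX 2 2 (by decide), hY 2 2 (by decide), hY 3 3 (by decide), hX 3 3 (by decide), hY 4 3 (by decide), hX 4 3 (by decide)]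
  ring

lemma ce34 (X Y : M5 k) (hX : SU X) (hY : SU Y) :
    (X*Y - Y*X) 3 4 = 0 := by
  simp only [Matrix.sub_apply, Matrix.mul_apply, Fin.sum_univ_five,
    hX 3 0 (by decide), hY 3 0 (by decide), hX 3 1 (by decide), hY 3 1 (by decide), hX 3 2 (by decide), hY 3 2 (by decide), hX 3 3 (by decide), hY 3 3 (by decide), hY 4 4 (by decide), hX 4 4 (by decide)]
  ring

lemma ce02 (X Y : M5 k) (hX : SU X) (hY : SU Y) :
    (X*Y - Y*X) 0 2 = X 0 1 * Y 1 2 -  Y 0 1 * X 1 2 := by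
  simp only [Matrix.sub_apply, Matrix.mul_apply, Fin.sum_univ_five,
    hX 0 0 (by decide), hY 0 0 (by decide), hY 2 2 (by decide), hX 2 2 (by decide), hY 3 2 (by decide), hX 3 2 (by decide), hY 4 2 (by decide), hX 4 2 (by decide)]
  ring

lemma ce13 (X Y : M5 k) (hX : SU X) (hY : SU Y) :
    (X*Y - Y*X) 1 3 = X 1 2 * Y 2 3 -  Y 1 2 * X 2 3 := by
  simp only [Matrix.sub_apply, Matrix.mul_apply, Fin.sum_univ_five,
    hX 1 0 (by decide), hY 1 0 (by decide), hX 1 1 (by decide), hY 1 1 (by decide), hY 3 3 (by decide), hX 3 3 (by decide), hY 4 3 (by decide), hX 4 3 (by decide)]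
  ring

lemma ce24 (X Y : M5 k) (hX : SU X) (hY : SU Y) :
    (X*Y - Y*X) 2 4 = X 2 3 * Y 3 4 -  Y 2 3 * X 3 4 := by
  simp only [Matrix.sub_apply, Matrix.mul_apply, Fin.sum_univ_five,
    hX 2 0 (by decide), hY 2 0 (by decide), hX 2 1 (by decide), hY 2 1 (by decide), hX 2 2 (by decide), hY 2 2 (by decide), hY 4 4 (by decide), hX 4 4 (by decide)]
  ring

lemma ce03 (X Y : M5 k) (hX : SU X) (hY : SU Y) :
    (X*Y - Y*X) 0 3 = X 0 1 * Y 1 3 + X 0 2 * Y 2 3 -  Y 0 1 * X 1 3 -  Y 0 2 * X 2 3 := by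
  simp only [Matrix.sub_apply, Matrix.mul_apply, Fin.sum_univ_five,
    hX 0 0 (by decide), hY 0 0 (by decide), hY 3 3 (by decide), hX 3 3 (by decide), hY 4 3 (by decide), hX 4 3 (by decide)]
  ring

lemma ce14 (X Y : M5 k) (hX : SU X) (hY : SU Y) :
    (X*Y - Y*X) 1 4 = X 1 2 * Y 2 4 + X 1 3 * Y 3 4 -  Y 1 2 * X 2 4 -  Y 1 3 * X 3 4 := by
  simp only [Matrix.sub_apply, Matrix.mul_apply, Fin.sum_univ_five,
    hX 1 0 (by decide), hY 1 0 (by decide), hX 1 1 (by decide), hY 1 1 (by decide), hY 4 4 (by decide), hX 4 4 (by decide)]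
  ring

lemma ce04 (X Y : M5 k) (hX : SU X) (hY : SU Y) :
    (X*Y - Y*X) 0 4 = X 0 1 * Y 1 4 + X 0 2 * Y 2 4 + X 0 3 * Y 3 4 -  Y 0 1 * X 1 4 -  Y 0 2 * X 2 4 -  Y 0 3 * X 3 4 := by
  simp only [Matrix.sub_apply, Matrix.mul_apply, Fin.sum_univ_five,
    hX 0 0 (by decide), hY 0 0 (by decide), hY 4 4 (by decide), hX 4 4 (by decide)]
  ring


lemma finisher (A B C E Z1 Z2 : M5 k)
    (hE : SU E) (hZ1su : SU Z1) (hZ2su : SU Z2)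
    (hz01 : Z1 0 1 = 0) (hz12 : Z1 1 2 = 0) (hz23 : Z1 2 3 = 0) (hz34 : Z1 3 4 = 0)
    (hz02 : Z1 0 2 = 0) (hz13 : Z1 1 3 = 0) (hz24 : Z1 2 4 = 0)
    (hy01 : Z2 0 1 = 0) (hy12 : Z2 1 2 = 0) (hy23 : Z2 2 3 = 0) (hy34 : Z2 3 4 = 0)
    (hy02 : Z2 0 2 = 0) (hy13 : Z2 1 3 = 0) (hy24 : Z2 2 4 = 0)
    (hp : Z2 0 3 = 0) (hq : Z2 1 4 = 0) (hgn : Z2 0 4 ≠ 0)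
    (he1 : E 0 1 = 0) (he2 : E 1 2 = 0) (he3 : E 2 3 = 0) (he4 : E 3 4 = 0)
    (he5 : E 0 2 = 0) (he6 : E 1 3 = 0) (he7 : E 2 4 = 0)
    (t : k) (ht8 : E 0 3 = t * Z1 0 3) (ht9 : E 1 4 = t * Z1 1 4)
    (hind : ∀ q0 q1 q2 q3 q4 q5 : k,
      q0 • A + q1 • B + q2 • C + q3 • E + q4 • Z1 + q5 • Z2 = 0 →
      q0 = 0 ∧ q1 = 0 ∧ q2 = 0 ∧ q3 = 0 ∧ q4 = 0 ∧ q5 = 0) : False := by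
  set s : k := (E 0 4 - t * Z1 0 4) / Z2 0 4 with hs
  have hsz : s * Z2 0 4 = E 0 4 - t * Z1 0 4 := by
    rw [hs]; field_simp
  have hcombo : (0:k) • A + (0:k) • B + (0:k) • C + (1:k) • E + (-t) • Z1 + (-s) • Z2 = 0 := by
    ext i j
    simp only [Matrix.add_apply, Matrix.smul_apply, smul_eq_mul, Matrix.zero_apply,
      zero_mul, one_mul, neg_mul, zero_add, add_zero]
    fin_cases i <;> fin_cases j
    · show E 0 0 + -(t * Z1 0 0) + -(s * Z2 0 0) = 0
      rw [hE 0 0 (by decide), hZ1su 0 0 (by decide), hZ2su 0 0 (by decide)]; ring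
    · show E 0 1 + -(t * Z1 0 1) + -(s * Z2 0 1) = 0
      rw [he1, hz01, hy01]; ring
    · show E 0 2 + -(t * Z1 0 2) + -(s * Z2 0 2) = 0
      rw [he5, hz02, hy02]; ring
    · show E 0 3 + -(t * Z1 0 3) + -(s * Z2 0 3) = 0
      rw [ht8, hp]; ring
    · show E 0 4 + -(t * Z1 0 4) + -(s * Z2 0 4) = 0
      linear_combination -hsz
    · show E 1 0 + -(t * Z1 1 0) + -(s * Z2 1 0) = 0
      rw [hE 1 0 (by decide), hZ1su 1 0 (by decide), hZ2su 1 0 (by decide)]; ring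
    · show E 1 1 + -(t * Z1 1 1) + -(s * Z2 1 1) = 0
      rw [hE 1 1 (by decide), hZ1su 1 1 (by decide), hZ2su 1 1 (by decide)]; ring
    · show E 1 2 + -(t * Z1 1 2) + -(s * Z2 1 2) = 0
      rw [he2, hz12, hy12]; ring
    · show E 1 3 + -(t * Z1 1 3) + -(s * Z2 1 3) = 0
      rw [he6, hz13, hy13]; ring
    · show E 1 4 + -(t * Z1 1 4) + -(s * Z2 1 4) = 0
      rw [ht9, hq]; ring
    · show E 2 0 + -(t * Z1 2 0) + -(s * Z2 2 0) = 0
      rw [hE 2 0 (by decide), hZ1su 2 0 (by decide), hZ2su 2 0 (by decide)]; ring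
    · show E 2 1 + -(t * Z1 2 1) + -(s * Z2 2 1) = 0
      rw [hE 2 1 (by decide), hZ1su 2 1 (by decide), hZ2su 2 1 (by decide)]; ring
    · show E 2 2 + -(t * Z1 2 2) + -(s * Z2 2 2) = 0
      rw [hE 2 2 (by decide), hZ1su 2 2 (by decide), hZ2su 2 2 (by decide)]; ring
    · show E 2 3 + -(t * Z1 2 3) + -(s * Z2 2 3) = 0
      rw [he3, hz23, hy23]; ring
    · show E 2 4 + -(t * Z1 2 4) + -(s * Z2 2 4) = 0
      rw [he7, hz24, hy24]; ring
    · show E 3 0 + -(t * Z1 3 0) + -(s * Z2 3 0) = 0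
      rw [hE 3 0 (by decide), hZ1su 3 0 (by decide), hZ2su 3 0 (by decide)]; ring
    · show E 3 1 + -(t * Z1 3 1) + -(s * Z2 3 1) = 0
      rw [hE 3 1 (by decide), hZ1su 3 1 (by decide), hZ2su 3 1 (by decide)]; ring
    · show E 3 2 + -(t * Z1 3 2) + -(s * Z2 3 2) = 0
      rw [hE 3 2 (by decide), hZ1su 3 2 (by decide), hZ2su 3 2 (by decide)]; ring
    · show E 3 3 + -(t * Z1 3 3) + -(s * Z2 3 3) = 0
      rw [hE 3 3 (by decide), hZ1su 3 3 (by decide), hZ2su 3 3 (by decide)]; ring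
    · show E 3 4 + -(t * Z1 3 4) + -(s * Z2 3 4) = 0
      rw [he4, hz34, hy34]; ring
    · show E 4 0 + -(t * Z1 4 0) + -(s * Z2 4 0) = 0
      rw [hE 4 0 (by decide), hZ1su 4 0 (by decide), hZ2su 4 0 (by decide)]; ring
    · show E 4 1 + -(t * Z1 4 1) + -(s * Z2 4 1) = 0
      rw [hE 4 1 (by decide), hZ1su 4 1 (by decide), hZ2su 4 1 (by decide)]; ring
    · show E 4 2 + -(t * Z1 4 2) + -(s * Z2 4 2) = 0
      rw [hE 4 2 (by decide), hZ1su 4 2 (by decide), hZ2su 4 2 (by decide)]; ring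
    · show E 4 3 + -(t * Z1 4 3) + -(s * Z2 4 3) = 0
      rw [hE 4 3 (by decide), hZ1su 4 3 (by decide), hZ2su 4 3 (by decide)]; ring
    · show E 4 4 + -(t * Z1 4 4) + -(s * Z2 4 4) = 0
      rw [hE 4 4 (by decide), hZ1su 4 4 (by decide), hZ2su 4 4 (by decide)]; ring
  obtain ⟨-, -, -, h3, -, -⟩ := hind 0 0 0 1 (-t) (-s) hcombo
  exact one_ne_zero h3


set_option maxHeartbeats 2000000 in
lemma lemT [CharZero k] (A B E C Z1 Z2 : M5 k)
    (hA : SU A) (hB : SU B) (hE : SU E)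
    (hC : C = A*B - B*A) (hZ1 : Z1 = A*C - C*A) (hZ2 : Z2 = B*C - C*B)
    (hAE : A*E - E*A = 0) (hBE : B*E - E*B = 0)
    (hAZ1 : A*Z1 - Z1*A = 0) (hBZ1 : B*Z1 - Z1*B = 0) (hEZ1 : E*Z1 - Z1*E = 0)
    (hp : Z2 0 3 = 0) (hq : Z2 1 4 = 0) (hw : Z1 1 4 ≠ 0)
    (hind : ∀ q0 q1 q2 q3 q4 q5 : k,
      q0 • A + q1 • B + q2 • C + q3 • E + q4 • Z1 + q5 • Z2 = 0 →
      q0 = 0 ∧ q1 = 0 ∧ q2 = 0 ∧ q3 = 0 ∧ q4 = 0 ∧ q5 = 0) : False := by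
  have hCsu : SU C := hC ▸ su_comm hA hB
  have hZ1su : SU Z1 := hZ1 ▸ su_comm hA hCsu
  have hZ2su : SU Z2 := hZ2 ▸ su_comm hB hCsu
  -- C entries
  have hc01 : C 0 1 = 0 := by rw [hC]; exact ce01 A B hA hB
  have hc12 : C 1 2 = 0 := by rw [hC]; exact ce12 A B hA hB
  have hc23 : C 2 3 = 0 := by rw [hC]; exact ce23 A B hA hB
  have hc34 : C 3 4 = 0 := by rw [hC]; exact ce34 A B hA hB
  have hc02 : C 0 2 = A 0 1 * B 1 2 - B 0 1 * A 1 2 := by rw [hC]; exact ce02 A B hA hB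
  have hc13 : C 1 3 = A 1 2 * B 2 3 - B 1 2 * A 2 3 := by rw [hC]; exact ce13 A B hA hB
  have hc24 : C 2 4 = A 2 3 * B 3 4 - B 2 3 * A 3 4 := by rw [hC]; exact ce24 A B hA hB
  have hc14 : C 1 4 = A 1 2 * B 2 4 + A 1 3 * B 3 4 - B 1 2 * A 2 4 - B 1 3 * A 3 4 := by
    rw [hC]; exact ce14 A B hA hB
  -- Z1 entries
  have hz01 : Z1 0 1 = 0 := by rw [hZ1]; exact ce01 A C hA hCsu
  have hz12 : Z1 1 2 = 0 := by rw [hZ1]; exact ce12 A C hA hCsu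
  have hz23 : Z1 2 3 = 0 := by rw [hZ1]; exact ce23 A C hA hCsu
  have hz34 : Z1 3 4 = 0 := by rw [hZ1]; exact ce34 A C hA hCsu
  have hz02 : Z1 0 2 = 0 := by rw [hZ1, ce02 A C hA hCsu, hc12, hc01]; ring
  have hz13 : Z1 1 3 = 0 := by rw [hZ1, ce13 A C hA hCsu, hc23, hc12]; ring
  have hz24 : Z1 2 4 = 0 := by rw [hZ1, ce24 A C hA hCsu, hc34, hc23]; ring
  have hu : Z1 0 3 = A 0 1 * C 1 3 - C 0 2 * A 2 3 := by
    rw [hZ1, ce03 A C hA hCsu, hc23, hc01]; ring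
  have hwv : Z1 1 4 = A 1 2 * C 2 4 - C 1 3 * A 3 4 := by
    rw [hZ1, ce14 A C hA hCsu, hc34, hc12]; ring
  -- Z2 entries
  have hy01 : Z2 0 1 = 0 := by rw [hZ2]; exact ce01 B C hB hCsu
  have hy12 : Z2 1 2 = 0 := by rw [hZ2]; exact ce12 B C hB hCsu
  have hy23 : Z2 2 3 = 0 := by rw [hZ2]; exact ce23 B C hB hCsu
  have hy34 : Z2 3 4 = 0 := by rw [hZ2]; exact ce34 B C hB hCsu
  have hy02 : Z2 0 2 = 0 := by rw [hZ2, ce02 B C hB hCsu, hc12, hc01]; ring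
  have hy13 : Z2 1 3 = 0 := by rw [hZ2, ce13 B C hB hCsu, hc23, hc12]; ring
  have hy24 : Z2 2 4 = 0 := by rw [hZ2, ce24 B C hB hCsu, hc34, hc23]; ring
  have hp' : B 0 1 * C 1 3 - C 0 2 * B 2 3 = 0 := by
    have h : Z2 0 3 = B 0 1 * C 1 3 - C 0 2 * B 2 3 := by
      rw [hZ2, ce03 B C hB hCsu, hc23, hc01]; ring
    rw [← h]; exact hp
  have hq' : B 1 2 * C 2 4 - C 1 3 * B 3 4 = 0 := by
    have h : Z2 1 4 = B 1 2 * C 2 4 - C 1 3 * B 3 4 := by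
      rw [hZ2, ce14 B C hB hCsu, hc34, hc12]; ring
    rw [← h]; exact hq
  have hgf : Z2 0 4 = B 0 1 * C 1 4 + B 0 2 * C 2 4 - C 0 2 * B 2 4 - C 0 3 * B 3 4 := by
    rw [hZ2, ce04 B C hB hCsu, hc34, hc01]; ring
  -- commutation equations
  have hm1 : A 0 1 * E 1 2 - E 0 1 * A 1 2 = 0 := by rw [← ce02 A E hA hE, hAE]; simp
  have hm2 : A 1 2 * E 2 3 - E 1 2 * A 2 3 = 0 := by rw [← ce13 A E hA hE, hAE]; simp
  have hm3 : A 2 3 * E 3 4 - E 2 3 * A 3 4 = 0 := by rw [← ce24 A E hA hE, hAE]; simp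
  have hm4 : B 0 1 * E 1 2 - E 0 1 * B 1 2 = 0 := by rw [← ce02 B E hB hE, hBE]; simp
  have hm5 : B 1 2 * E 2 3 - E 1 2 * B 2 3 = 0 := by rw [← ce13 B E hB hE, hBE]; simp
  have hm6 : B 2 3 * E 3 4 - E 2 3 * B 3 4 = 0 := by rw [← ce24 B E hB hE, hBE]; simp
  have hm7 : A 0 1 * E 1 3 + A 0 2 * E 2 3 - E 0 1 * A 1 3 - E 0 2 * A 2 3 = 0 := by
    rw [← ce03 A E hA hE, hAE]; simp
  have hm8 : A 1 2 * E 2 4 + A 1 3 * E 3 4 - E 1 2 * A 2 4 - E 1 3 * A 3 4 = 0 := by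
    rw [← ce14 A E hA hE, hAE]; simp
  have hm9 : B 0 1 * E 1 3 + B 0 2 * E 2 3 - E 0 1 * B 1 3 - E 0 2 * B 2 3 = 0 := by
    rw [← ce03 B E hB hE, hBE]; simp
  have hm10 : B 1 2 * E 2 4 + B 1 3 * E 3 4 - E 1 2 * B 2 4 - E 1 3 * B 3 4 = 0 := by
    rw [← ce14 B E hB hE, hBE]; simp
  have hm11 : A 0 1 * E 1 4 + A 0 2 * E 2 4 + A 0 3 * E 3 4
      - E 0 1 * A 1 4 - E 0 2 * A 2 4 - E 0 3 * A 3 4 = 0 := by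
    rw [← ce04 A E hA hE, hAE]; simp
  have hm12 : B 0 1 * E 1 4 + B 0 2 * E 2 4 + B 0 3 * E 3 4
      - E 0 1 * B 1 4 - E 0 2 * B 2 4 - E 0 3 * B 3 4 = 0 := by
    rw [← ce04 B E hB hE, hBE]; simp
  have hm13 : A 0 1 * Z1 1 4 - Z1 0 3 * A 3 4 = 0 := by
    have h := ce04 A Z1 hA hZ1su
    rw [hAZ1] at h
    simp only [Matrix.zero_apply] at h
    linear_combination -h - A 0 2 * hz24 - A 0 3 * hz34 + A 1 4 * hz01 + A 2 4 * hz02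
  have hm14 : B 0 1 * Z1 1 4 - Z1 0 3 * B 3 4 = 0 := by
    have h := ce04 B Z1 hB hZ1su
    rw [hBZ1] at h
    simp only [Matrix.zero_apply] at h
    linear_combination -h - B 0 2 * hz24 - B 0 3 * hz34 + B 1 4 * hz01 + B 2 4 * hz02
  have hm15 : E 0 1 * Z1 1 4 - Z1 0 3 * E 3 4 = 0 := by
    have h := ce04 E Z1 hE hZ1su
    rw [hEZ1] at h
    simp only [Matrix.zero_apply] at h
    linear_combination -h - E 0 2 * hz24 - E 0 3 * hz34 + E 1 4 * hz01 + E 2 4 * hz02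
  -- global case: gamma = 0
  by_cases hg0 : Z2 0 4 = 0
  · have hZ2zero : Z2 = 0 := by
      ext i j
      simp only [Matrix.zero_apply]
      fin_cases i <;> fin_cases j
      · exact hZ2su 0 0 (by decide)
      · exact hy01
      · exact hy02
      · exact hp
      · exact hg0
      · exact hZ2su 1 0 (by decide)
      · exact hZ2su 1 1 (by decide)
      · exact hy12
      · exact hy13
      · exact hq
      · exact hZ2su 2 0 (by decide)
      · exact hZ2su 2 1 (by decide)
      · exact hZ2su 2 2 (by decide)
      · exact hy23
      · exact hy24
      · exact hZ2su 3 0 (by decide)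
      · exact hZ2su 3 1 (by decide)
      · exact hZ2su 3 2 (by decide)
      · exact hZ2su 3 3 (by decide)
      · exact hy34
      · exact hZ2su 4 0 (by decide)
      · exact hZ2su 4 1 (by decide)
      · exact hZ2su 4 2 (by decide)
      · exact hZ2su 4 3 (by decide)
      · exact hZ2su 4 4 (by decide)
    obtain ⟨-, -, -, -, -, h5⟩ := hind 0 0 0 0 0 1 (by rw [hZ2zero]; simp)
    exact one_ne_zero h5
  -- now split on u
  by_cases hu0 : Z1 0 3 = 0
  · -- BRANCH X1 : u = 0
    have ha1 : A 0 1 = 0 := by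
      have h : A 0 1 * Z1 1 4 = 0 := by linear_combination hm13 + A 3 4 * hu0
      exact mulz h hw
    have hb1 : B 0 1 = 0 := by
      have h : B 0 1 * Z1 1 4 = 0 := by linear_combination hm14 + B 3 4 * hu0
      exact mulz h hw
    have he1 : E 0 1 = 0 := by
      have h : E 0 1 * Z1 1 4 = 0 := by linear_combination hm15 + E 3 4 * hu0
      exact mulz h hw
    have hc1 : C 0 2 = 0 := by rw [hc02, ha1, hb1]; ring
    by_cases hcc2 : C 1 3 = 0
    · -- X1.b
      have hw2 : Z1 1 4 = A 1 2 * C 2 4 := by rw [hwv, hcc2]; ring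
      have ha2 : A 1 2 ≠ 0 := fun h => hw (by rw [hw2, h, zero_mul])
      have hc3 : C 2 4 ≠ 0 := fun h => hw (by rw [hw2, h, mul_zero])
      have hb2 : B 1 2 = 0 := by
        have h : B 1 2 * C 2 4 = 0 := by linear_combination hq' + B 3 4 * hcc2
        exact mulz h hc3
      have hb3 : B 2 3 = 0 := by
        have h : A 1 2 * B 2 3 = 0 := by linear_combination -hc13 + hcc2 + A 2 3 * hb2
        exact mulz' h ha2
      have hc3e : C 2 4 = A 2 3 * B 3 4 := by linear_combination hc24 - A 3 4 * hb3
      have ha3 : A 2 3 ≠ 0 := fun h => hc3 (by rw [hc3e, h, zero_mul])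
      have hb4 : B 3 4 ≠ 0 := fun h => hc3 (by rw [hc3e, h, mul_zero])
      have he3 : E 2 3 = 0 := by
        have h : E 2 3 * B 3 4 = 0 := by linear_combination -hm6 + E 3 4 * hb3
        exact mulz h hb4
      have he2 : E 1 2 = 0 := by
        have h : E 1 2 * A 2 3 = 0 := by linear_combination -hm2 + A 1 2 * he3
        exact mulz h ha3
      have he4 : E 3 4 = 0 := by
        have h : A 2 3 * E 3 4 = 0 := by linear_combination hm3 + A 3 4 * he3
        exact mulz' h ha3
      have he5 : E 0 2 = 0 := by
        have h : E 0 2 * A 2 3 = 0 := by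
          linear_combination -hm7 + E 1 3 * ha1 + A 0 2 * he3 - A 1 3 * he1
        exact mulz h ha3
      have he6 : E 1 3 = 0 := by
        have h : E 1 3 * B 3 4 = 0 := by
          linear_combination -hm10 + E 2 4 * hb2 + B 1 3 * he4 - B 2 4 * he2
        exact mulz h hb4
      have he7 : E 2 4 = 0 := by
        have h : A 1 2 * E 2 4 = 0 := by
          linear_combination hm8 - A 1 3 * he4 + A 2 4 * he2 + A 3 4 * he6
        exact mulz' h ha2
      have he8 : E 0 3 = 0 := by
        have h : E 0 3 * B 3 4 = 0 := by
          linear_combination -hm12 + E 1 4 * hb1 + B 0 2 * he7 + B 0 3 * he4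
            - B 1 4 * he1 - B 2 4 * he5
        exact mulz h hb4
      exact finisher A B C E Z1 Z2 hE hZ1su hZ2su hz01 hz12 hz23 hz34 hz02 hz13 hz24
        hy01 hy12 hy23 hy34 hy02 hy13 hy24 hp hq hg0
        he1 he2 he3 he4 he5 he6 he7 (E 1 4 / Z1 1 4)
        (by rw [he8, hu0]; ring) (by field_simp) hind
    · -- X1.a : c2 ≠ 0
      have he3 : E 2 3 = 0 := by
        have h : E 2 3 * C 1 3 = 0 := by
          linear_combination B 2 3 * hm2 - A 2 3 * hm5 + E 2 3 * hc13
        exact mulz h hcc2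
      have he2 : E 1 2 = 0 := by
        have h : E 1 2 * C 1 3 = 0 := by
          linear_combination B 1 2 * hm2 - A 1 2 * hm5 + E 1 2 * hc13
        exact mulz h hcc2
      have he4 : E 3 4 = 0 := by
        by_contra h4
        have hA23 : A 2 3 = 0 := by
          have h : A 2 3 * E 3 4 = 0 := by linear_combination hm3 + A 3 4 * he3
          exact mulz h h4
        have hB23 : B 2 3 = 0 := by
          have h : B 2 3 * E 3 4 = 0 := by linear_combination hm6 + B 3 4 * he3
          exact mulz h h4
        exact hcc2 (by rw [hc13, hA23, hB23]; ring)
      have he5 : E 0 2 = 0 := by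
        by_contra h5
        have hA23 : A 2 3 = 0 := by
          have h : E 0 2 * A 2 3 = 0 := by
            linear_combination -hm7 + E 1 3 * ha1 + A 0 2 * he3 - A 1 3 * he1
          exact mulz' h h5
        have hB23 : B 2 3 = 0 := by
          have h : E 0 2 * B 2 3 = 0 := by
            linear_combination -hm9 + E 1 3 * hb1 + B 0 2 * he3 - B 1 3 * he1
          exact mulz' h h5
        exact hcc2 (by rw [hc13, hA23, hB23]; ring)
      by_cases hs : A 1 2 * B 3 4 - A 3 4 * B 1 2 = 0
      · -- X1.a.ii
        have hb2 : B 1 2 = 0 := by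
          have h : B 1 2 * Z1 1 4 = 0 := by
            linear_combination B 1 2 * hwv + A 1 2 * hq' + C 1 3 * hs
          exact mulz h hw
        have hb4 : B 3 4 = 0 := by
          have h : C 1 3 * B 3 4 = 0 := by linear_combination -hq' + C 2 4 * hb2
          exact mulz' h hcc2
        have hc2e : C 1 3 = A 1 2 * B 2 3 := by linear_combination hc13 - A 2 3 * hb2
        have ha2n : A 1 2 ≠ 0 := fun h => hcc2 (by rw [hc2e, h, zero_mul])
        have hb3n : B 2 3 ≠ 0 := fun h => hcc2 (by rw [hc2e, h, mul_zero])
        have hc3e : C 2 4 = -(B 2 3 * A 3 4) := by linear_combination hc24 + A 2 3 * hb4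
        have hwe : Z1 1 4 = -(2*(A 1 2 * (B 2 3 * A 3 4))) := by
          linear_combination hwv + A 1 2 * hc3e - A 3 4 * hc2e
        have ha4n : A 3 4 ≠ 0 := fun h => hw (by rw [hwe, h]; ring)
        have hge : Z2 0 4 = B 0 2 * C 2 4 := by
          linear_combination hgf + C 1 4 * hb1 - B 2 4 * hc1 - C 0 3 * hb4
        have hb5n : B 0 2 ≠ 0 := fun h => hg0 (by rw [hge, h, zero_mul])
        have he4' : E 3 4 = 0 := he4
        have he7 : E 2 4 = 0 := by
          have h : B 0 2 * E 2 4 = 0 := by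
            linear_combination hm12 - E 1 4 * hb1 - B 0 3 * he4 + E 0 3 * hb4
              + B 1 4 * he1 + B 2 4 * he5
          exact mulz' h hb5n
        have he6 : E 1 3 = 0 := by
          have h : E 1 3 * A 3 4 = 0 := by
            linear_combination -hm8 + A 1 2 * he7 + A 1 3 * he4 - A 2 4 * he2
          exact mulz h ha4n
        have he8 : E 0 3 = 0 := by
          have h : E 0 3 * A 3 4 = 0 := by
            linear_combination -hm11 + E 1 4 * ha1 + A 0 2 * he7 + A 0 3 * he4
              - A 1 4 * he1 - A 2 4 * he5
          exact mulz h ha4n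
        exact finisher A B C E Z1 Z2 hE hZ1su hZ2su hz01 hz12 hz23 hz34 hz02 hz13 hz24
          hy01 hy12 hy23 hy34 hy02 hy13 hy24 hp hq hg0
          he1 he2 he3 he4 he5 he6 he7 (E 1 4 / Z1 1 4)
          (by rw [he8, hu0]; ring) (by field_simp) hind
      · -- X1.a.i : s ≠ 0
        have h8 : A 1 2 * E 2 4 - E 1 3 * A 3 4 = 0 := by
          linear_combination hm8 - A 1 3 * he4 + A 2 4 * he2
        have h10 : B 1 2 * E 2 4 - E 1 3 * B 3 4 = 0 := by
          linear_combination hm10 - B 1 3 * he4 + B 2 4 * he2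
        have he7 : E 2 4 = 0 := by
          have h : E 2 4 * (A 1 2 * B 3 4 - A 3 4 * B 1 2) = 0 := by
            linear_combination B 3 4 * h8 - A 3 4 * h10
          exact mulz h hs
        have he6 : E 1 3 = 0 := by
          have h : E 1 3 * (A 1 2 * B 3 4 - A 3 4 * B 1 2) = 0 := by
            linear_combination B 1 2 * h8 - A 1 2 * h10
          exact mulz h hs
        have he8 : E 0 3 = 0 := by
          by_contra h8n
          have hA34 : A 3 4 = 0 := by
            have h : E 0 3 * A 3 4 = 0 := by
              linear_combination -hm11 + E 1 4 * ha1 + A 0 2 * he7 + A 0 3 * he4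
                - A 1 4 * he1 - A 2 4 * he5
            exact mulz' h h8n
          have hB34 : B 3 4 = 0 := by
            have h : E 0 3 * B 3 4 = 0 := by
              linear_combination -hm12 + E 1 4 * hb1 + B 0 2 * he7 + B 0 3 * he4
                - B 1 4 * he1 - B 2 4 * he5
            exact mulz' h h8n
          have hC24 : C 2 4 = 0 := by rw [hc24, hA34, hB34]; ring
          exact hw (by rw [hwv, hC24, hA34]; ring)
        exact finisher A B C E Z1 Z2 hE hZ1su hZ2su hz01 hz12 hz23 hz34 hz02 hz13 hz24
          hy01 hy12 hy23 hy34 hy02 hy13 hy24 hp hq hg0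
          he1 he2 he3 he4 he5 he6 he7 (E 1 4 / Z1 1 4)
          (by rw [he8, hu0]; ring) (by field_simp) hind
  · -- BRANCH X2 : u ≠ 0
    by_cases hcc2 : C 1 3 = 0
    · -- X2.b
      have hue : Z1 0 3 = -(C 0 2 * A 2 3) := by linear_combination hu + A 0 1 * hcc2
      have hc1n : C 0 2 ≠ 0 := fun h => hu0 (by rw [hue, h, zero_mul, neg_zero])
      have ha3n : A 2 3 ≠ 0 := fun h => hu0 (by rw [hue, h, mul_zero, neg_zero])
      have hwe : Z1 1 4 = A 1 2 * C 2 4 := by linear_combination hwv - A 3 4 * hcc2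
      have ha2n : A 1 2 ≠ 0 := fun h => hw (by rw [hwe, h, zero_mul])
      have hc3n : C 2 4 ≠ 0 := fun h => hw (by rw [hwe, h, mul_zero])
      have hb3 : B 2 3 = 0 := by
        have h : C 0 2 * B 2 3 = 0 := by linear_combination -hp' + B 0 1 * hcc2
        exact mulz' h hc1n
      have hb2 : B 1 2 = 0 := by
        have h : B 1 2 * A 2 3 = 0 := by linear_combination hc13 - hcc2 + A 1 2 * hb3
        exact mulz h ha3n
      have hc3e : C 2 4 = A 2 3 * B 3 4 := by linear_combination hc24 - A 3 4 * hb3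
      have hb4n : B 3 4 ≠ 0 := fun h => hc3n (by rw [hc3e, h, mul_zero])
      have hb1n : B 0 1 ≠ 0 := by
        intro h
        have h2 : Z1 0 3 * B 3 4 = 0 := by linear_combination -hm14 + Z1 1 4 * h
        exact hu0 (mulz h2 hb4n)
      have he2 : E 1 2 = 0 := by
        have h : B 0 1 * E 1 2 = 0 := by linear_combination hm4 + E 0 1 * hb2
        exact mulz' h hb1n
      have he3 : E 2 3 = 0 := by
        have h : E 2 3 * B 3 4 = 0 := by linear_combination -hm6 + E 3 4 * hb3
        exact mulz h hb4n
      have he1 : E 0 1 = 0 := by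
        have h : E 0 1 * A 1 2 = 0 := by linear_combination -hm1 + A 0 1 * he2
        exact mulz h ha2n
      have he4 : E 3 4 = 0 := by
        have h : Z1 0 3 * E 3 4 = 0 := by linear_combination -hm15 + Z1 1 4 * he1
        exact mulz' h hu0
      have he6 : E 1 3 = 0 := by
        have h : B 0 1 * E 1 3 = 0 := by
          linear_combination hm9 - B 0 2 * he3 + E 0 2 * hb3 + B 1 3 * he1
        exact mulz' h hb1n
      have he5 : E 0 2 = 0 := by
        have h : E 0 2 * A 2 3 = 0 := by
          linear_combination -hm7 + A 0 1 * he6 + A 0 2 * he3 - A 1 3 * he1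
        exact mulz h ha3n
      have he7 : E 2 4 = 0 := by
        have h : A 1 2 * E 2 4 = 0 := by
          linear_combination hm8 - A 1 3 * he4 + A 2 4 * he2 + A 3 4 * he6
        exact mulz' h ha2n
      have h12' : B 0 1 * E 1 4 - E 0 3 * B 3 4 = 0 := by
        linear_combination hm12 - B 0 2 * he7 - B 0 3 * he4 + B 1 4 * he1 + B 2 4 * he5
      have hkey : E 1 4 * Z1 0 3 = E 0 3 * Z1 1 4 := by
        have h : B 0 1 * (E 1 4 * Z1 0 3 - E 0 3 * Z1 1 4) = 0 := by
          linear_combination Z1 0 3 * h12' - E 0 3 * hm14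
        have h2 := mulz' h hb1n
        linear_combination h2
      exact finisher A B C E Z1 Z2 hE hZ1su hZ2su hz01 hz12 hz23 hz34 hz02 hz13 hz24
        hy01 hy12 hy23 hy34 hy02 hy13 hy24 hp hq hg0
        he1 he2 he3 he4 he5 he6 he7 (E 0 3 / Z1 0 3)
        (by field_simp) (by field_simp; linear_combination hkey) hind
    · -- X2.a : c2 ≠ 0
      have he3 : E 2 3 = 0 := by
        have h : E 2 3 * C 1 3 = 0 := by
          linear_combination B 2 3 * hm2 - A 2 3 * hm5 + E 2 3 * hc13
        exact mulz h hcc2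
      have he2 : E 1 2 = 0 := by
        have h : E 1 2 * C 1 3 = 0 := by
          linear_combination B 1 2 * hm2 - A 1 2 * hm5 + E 1 2 * hc13
        exact mulz h hcc2
      have he1 : E 0 1 = 0 := by
        by_contra h1
        have hA12 : A 1 2 = 0 := by
          have h : E 0 1 * A 1 2 = 0 := by linear_combination -hm1 + A 0 1 * he2
          exact mulz' h h1
        have hB12 : B 1 2 = 0 := by
          have h : E 0 1 * B 1 2 = 0 := by linear_combination -hm4 + B 0 1 * he2
          exact mulz' h h1
        exact hcc2 (by rw [hc13, hA12, hB12]; ring)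
      have he4 : E 3 4 = 0 := by
        have h : Z1 0 3 * E 3 4 = 0 := by linear_combination -hm15 + Z1 1 4 * he1
        exact mulz' h hu0
      by_cases hM : A 0 1 * B 2 3 - A 2 3 * B 0 1 = 0
      · -- X2.a.ii
        have hb1 : B 0 1 = 0 := by
          have h : B 0 1 * Z1 0 3 = 0 := by
            linear_combination B 0 1 * hu + A 0 1 * hp' + C 0 2 * hM
          exact mulz h hu0
        have hb3 : B 2 3 = 0 := by
          by_contra hb3n
          have hA01 : A 0 1 = 0 := by
            have h : A 0 1 * B 2 3 = 0 := by linear_combination hM + A 2 3 * hb1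
            exact mulz h hb3n
          have hC02 : C 0 2 = 0 := by
            have h : C 0 2 * B 2 3 = 0 := by linear_combination -hp' + C 1 3 * hb1
            exact mulz h hb3n
          exact hu0 (by rw [hu, hA01, hC02]; ring)
        have hb4 : B 3 4 = 0 := by
          have h : Z1 0 3 * B 3 4 = 0 := by linear_combination -hm14 + Z1 1 4 * hb1
          exact mulz' h hu0
        have hc3 : C 2 4 = 0 := by rw [hc24, hb4, hb3]; ring
        have h1 : C 1 3 = -(B 1 2 * A 2 3) := by linear_combination hc13 + A 1 2 * hb3
        have h2 : C 0 2 = A 0 1 * B 1 2 := by linear_combination hc02 - A 1 2 * hb1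
        have hue : Z1 0 3 = -(2*(A 0 1 * (B 1 2 * A 2 3))) := by
          linear_combination hu + A 0 1 * h1 - A 2 3 * h2
        have ha1n : A 0 1 ≠ 0 := fun h => hu0 (by rw [hue, h]; ring)
        have hwe : Z1 1 4 = B 1 2 * A 2 3 * A 3 4 := by
          linear_combination hwv + A 1 2 * hc3 - A 3 4 * h1
        have ha4n : A 3 4 ≠ 0 := fun h => hw (by rw [hwe, h]; ring)
        have hb2n : B 1 2 ≠ 0 := fun h => hu0 (by rw [hue, h]; ring)
        have ha3n : A 2 3 ≠ 0 := fun h => hu0 (by rw [hue, h]; ring)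
        have hcontra : (3:k) * (A 0 1 * (B 1 2 * (A 2 3 * A 3 4))) = 0 := by
          linear_combination hm13 - A 0 1 * hwe + A 3 4 * hue
        have h3 : (3:k) ≠ 0 := by norm_num
        exact (mul_ne_zero h3 (mul_ne_zero ha1n (mul_ne_zero hb2n
          (mul_ne_zero ha3n ha4n)))) hcontra
      · -- X2.a.i : M ≠ 0
        have h7' : A 0 1 * E 1 3 - E 0 2 * A 2 3 = 0 := by
          linear_combination hm7 - A 0 2 * he3 + A 1 3 * he1
        have h9' : B 0 1 * E 1 3 - E 0 2 * B 2 3 = 0 := by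
          linear_combination hm9 - B 0 2 * he3 + B 1 3 * he1
        have he6 : E 1 3 = 0 := by
          have h : E 1 3 * (A 0 1 * B 2 3 - A 2 3 * B 0 1) = 0 := by
            linear_combination B 2 3 * h7' - A 2 3 * h9'
          exact mulz h hM
        have he5 : E 0 2 = 0 := by
          have h : E 0 2 * (A 0 1 * B 2 3 - A 2 3 * B 0 1) = 0 := by
            linear_combination B 0 1 * h7' - A 0 1 * h9'
          exact mulz h hM
        have he7 : E 2 4 = 0 := by
          by_contra h7n
          have hA12 : A 1 2 = 0 := by
            have h : A 1 2 * E 2 4 = 0 := by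
              linear_combination hm8 - A 1 3 * he4 + A 2 4 * he2 + A 3 4 * he6
            exact mulz h h7n
          have hB12 : B 1 2 = 0 := by
            have h : B 1 2 * E 2 4 = 0 := by
              linear_combination hm10 - B 1 3 * he4 + B 2 4 * he2 + B 3 4 * he6
            exact mulz h h7n
          exact hcc2 (by rw [hc13, hA12, hB12]; ring)
        have h11' : A 0 1 * E 1 4 - E 0 3 * A 3 4 = 0 := by
          linear_combination hm11 - A 0 2 * he7 - A 0 3 * he4 + A 1 4 * he1 + A 2 4 * he5
        have h12' : B 0 1 * E 1 4 - E 0 3 * B 3 4 = 0 := by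
          linear_combination hm12 - B 0 2 * he7 - B 0 3 * he4 + B 1 4 * he1 + B 2 4 * he5
        have hkey : E 1 4 * Z1 0 3 = E 0 3 * Z1 1 4 := by
          by_cases ha1 : A 0 1 = 0
          · by_cases hb1 : B 0 1 = 0
            · exfalso
              have hC02 : C 0 2 = 0 := by rw [hc02, ha1, hb1]; ring
              exact hu0 (by rw [hu, ha1, hC02]; ring)
            · have h : B 0 1 * (E 1 4 * Z1 0 3 - E 0 3 * Z1 1 4) = 0 := by
                linear_combination Z1 0 3 * h12' - E 0 3 * hm14
              have h2 := mulz' h hb1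
              linear_combination h2
          · have h : A 0 1 * (E 1 4 * Z1 0 3 - E 0 3 * Z1 1 4) = 0 := by
              linear_combination Z1 0 3 * h11' - E 0 3 * hm13
            have h2 := mulz' h ha1
            linear_combination h2
        exact finisher A B C E Z1 Z2 hE hZ1su hZ2su hz01 hz12 hz23 hz34 hz02 hz13 hz24
          hy01 hy12 hy23 hy34 hy02 hy13 hy24 hp hq hg0
          he1 he2 he3 he4 he5 he6 he7 (E 0 3 / Z1 0 3)
          (by field_simp) (by field_simp; linear_combination hkey) hind

set_option maxHeartbeats 2000000 in
lemma lemS [CharZero k] (A B E C Z1 Z2 : M5 k)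
    (hA : SU A) (hB : SU B) (hE : SU E)
    (hC : C = A*B - B*A) (hZ1 : Z1 = A*C - C*A) (hZ2 : Z2 = B*C - C*B)
    (hAE : A*E - E*A = 0) (hBE : B*E - E*B = 0)
    (hAZ1 : A*Z1 - Z1*A = 0) (hBZ1 : B*Z1 - Z1*B = 0) (hEZ1 : E*Z1 - Z1*E = 0)
    (hp : Z2 0 3 = 0) (hq : Z2 1 4 = 0)
    (hind : ∀ q0 q1 q2 q3 q4 q5 : k,
      q0 • A + q1 • B + q2 • C + q3 • E + q4 • Z1 + q5 • Z2 = 0 →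
      q0 = 0 ∧ q1 = 0 ∧ q2 = 0 ∧ q3 = 0 ∧ q4 = 0 ∧ q5 = 0) : False := by
  by_cases hw : Z1 1 4 ≠ 0
  · exact lemT A B E C Z1 Z2 hA hB hE hC hZ1 hZ2 hAE hBE hAZ1 hBZ1 hEZ1 hp hq hw hind
  push_neg at hw
  by_cases hu : Z1 0 3 ≠ 0
  · -- apply T to the flipped picture
    refine lemT (flp A) (flp B) (flp E) (flp C) (flp Z1) (flp Z2)
      (flp_su hA) (flp_su hB) (flp_su hE) ?_ ?_ ?_ ?_ ?_ ?_ ?_ ?_ ?_ ?_ ?_ ?_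
    · rw [flp_comm, ← hC]
    · rw [flp_comm, ← hZ1]
    · rw [flp_comm, ← hZ2]
    · rw [flp_comm, hAE, flp_zero]
    · rw [flp_comm, hBE, flp_zero]
    · rw [flp_comm, hAZ1, flp_zero]
    · rw [flp_comm, hBZ1, flp_zero]
    · rw [flp_comm, hEZ1, flp_zero]
    · rw [flp_apply, show (Fin.rev 3 : Fin 5) = 1 by decide,
        show (Fin.rev 0 : Fin 5) = 4 by decide, hq, neg_zero]
    · rw [flp_apply, show (Fin.rev 4 : Fin 5) = 0 by decide,
        show (Fin.rev 1 : Fin 5) = 3 by decide, hp, neg_zero]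
    · rw [flp_apply, show (Fin.rev 4 : Fin 5) = 0 by decide,
        show (Fin.rev 1 : Fin 5) = 3 by decide]
      exact neg_ne_zero.mpr hu
    · intro q0 q1 q2 q3 q4 q5 hcb
      have h2 := congrArg flp hcb
      simp only [flp_add, flp_smul, flp_flip, flp_zero] at h2
      exact hind q0 q1 q2 q3 q4 q5 h2
  · push_neg at hu
    -- both top coordinates of Z1 vanish; Z1 and Z2 are multiples of E15
    have hCsu : SU C := hC ▸ su_comm hA hB
    have hZ1su : SU Z1 := hZ1 ▸ su_comm hA hCsu
    have hZ2su : SU Z2 := hZ2 ▸ su_comm hB hCsu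
    have hc01 : C 0 1 = 0 := by rw [hC]; exact ce01 A B hA hB
    have hc12 : C 1 2 = 0 := by rw [hC]; exact ce12 A B hA hB
    have hc23 : C 2 3 = 0 := by rw [hC]; exact ce23 A B hA hB
    have hc34 : C 3 4 = 0 := by rw [hC]; exact ce34 A B hA hB
    have hz01 : Z1 0 1 = 0 := by rw [hZ1]; exact ce01 A C hA hCsu
    have hz12 : Z1 1 2 = 0 := by rw [hZ1]; exact ce12 A C hA hCsu
    have hz23 : Z1 2 3 = 0 := by rw [hZ1]; exact ce23 A C hA hCsu
    have hz34 : Z1 3 4 = 0 := by rw [hZ1]; exact ce34 A C hA hCsu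
    have hz02 : Z1 0 2 = 0 := by rw [hZ1, ce02 A C hA hCsu, hc12, hc01]; ring
    have hz13 : Z1 1 3 = 0 := by rw [hZ1, ce13 A C hA hCsu, hc23, hc12]; ring
    have hz24 : Z1 2 4 = 0 := by rw [hZ1, ce24 A C hA hCsu, hc34, hc23]; ring
    have hy01 : Z2 0 1 = 0 := by rw [hZ2]; exact ce01 B C hB hCsu
    have hy12 : Z2 1 2 = 0 := by rw [hZ2]; exact ce12 B C hB hCsu
    have hy23 : Z2 2 3 = 0 := by rw [hZ2]; exact ce23 B C hB hCsu
    have hy34 : Z2 3 4 = 0 := by rw [hZ2]; exact ce34 B C hB hCsu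
    have hy02 : Z2 0 2 = 0 := by rw [hZ2, ce02 B C hB hCsu, hc12, hc01]; ring
    have hy13 : Z2 1 3 = 0 := by rw [hZ2, ce13 B C hB hCsu, hc23, hc12]; ring
    have hy24 : Z2 2 4 = 0 := by rw [hZ2, ce24 B C hB hCsu, hc34, hc23]; ring
    by_cases hv : Z1 0 4 = 0
    · have hZ10 : Z1 = 0 := by
        ext i j
        simp only [Matrix.zero_apply]
        fin_cases i <;> fin_cases j
        · exact hZ1su 0 0 (by decide)
        · exact hz01
        · exact hz02
        · exact hu
        · exact hv
        · exact hZ1su 1 0 (by decide)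
        · exact hZ1su 1 1 (by decide)
        · exact hz12
        · exact hz13
        · exact hw
        · exact hZ1su 2 0 (by decide)
        · exact hZ1su 2 1 (by decide)
        · exact hZ1su 2 2 (by decide)
        · exact hz23
        · exact hz24
        · exact hZ1su 3 0 (by decide)
        · exact hZ1su 3 1 (by decide)
        · exact hZ1su 3 2 (by decide)
        · exact hZ1su 3 3 (by decide)
        · exact hz34
        · exact hZ1su 4 0 (by decide)
        · exact hZ1su 4 1 (by decide)
        · exact hZ1su 4 2 (by decide)
        · exact hZ1su 4 3 (by decide)
        · exact hZ1su 4 4 (by decide)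
      obtain ⟨-, -, -, -, h4, -⟩ := hind 0 0 0 0 1 0 (by rw [hZ10]; simp)
      exact one_ne_zero h4
    · have hcombo : (0:k) • A + (0:k) • B + (0:k) • C + (0:k) • E
          + (Z2 0 4) • Z1 + (-(Z1 0 4)) • Z2 = 0 := by
        ext i j
        simp only [Matrix.add_apply, Matrix.smul_apply, smul_eq_mul, Matrix.zero_apply,
          zero_mul, neg_mul, zero_add, add_zero]
        fin_cases i <;> fin_cases j
        · show Z2 0 4 * Z1 0 0 + -(Z1 0 4 * Z2 0 0) = 0
          rw [hZ1su 0 0 (by decide), hZ2su 0 0 (by decide)]; ring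
        · show Z2 0 4 * Z1 0 1 + -(Z1 0 4 * Z2 0 1) = 0
          rw [hz01, hy01]; ring
        · show Z2 0 4 * Z1 0 2 + -(Z1 0 4 * Z2 0 2) = 0
          rw [hz02, hy02]; ring
        · show Z2 0 4 * Z1 0 3 + -(Z1 0 4 * Z2 0 3) = 0
          rw [hu, hp]; ring
        · show Z2 0 4 * Z1 0 4 + -(Z1 0 4 * Z2 0 4) = 0
          ring
        · show Z2 0 4 * Z1 1 0 + -(Z1 0 4 * Z2 1 0) = 0
          rw [hZ1su 1 0 (by decide), hZ2su 1 0 (by decide)]; ring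
        · show Z2 0 4 * Z1 1 1 + -(Z1 0 4 * Z2 1 1) = 0
          rw [hZ1su 1 1 (by decide), hZ2su 1 1 (by decide)]; ring
        · show Z2 0 4 * Z1 1 2 + -(Z1 0 4 * Z2 1 2) = 0
          rw [hz12, hy12]; ring
        · show Z2 0 4 * Z1 1 3 + -(Z1 0 4 * Z2 1 3) = 0
          rw [hz13, hy13]; ring
        · show Z2 0 4 * Z1 1 4 + -(Z1 0 4 * Z2 1 4) = 0
          rw [hw, hq]; ring
        · show Z2 0 4 * Z1 2 0 + -(Z1 0 4 * Z2 2 0) = 0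
          rw [hZ1su 2 0 (by decide), hZ2su 2 0 (by decide)]; ring
        · show Z2 0 4 * Z1 2 1 + -(Z1 0 4 * Z2 2 1) = 0
          rw [hZ1su 2 1 (by decide), hZ2su 2 1 (by decide)]; ring
        · show Z2 0 4 * Z1 2 2 + -(Z1 0 4 * Z2 2 2) = 0
          rw [hZ1su 2 2 (by decide), hZ2su 2 2 (by decide)]; ring
        · show Z2 0 4 * Z1 2 3 + -(Z1 0 4 * Z2 2 3) = 0
          rw [hz23, hy23]; ring
        · show Z2 0 4 * Z1 2 4 + -(Z1 0 4 * Z2 2 4) = 0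
          rw [hz24, hy24]; ring
        · show Z2 0 4 * Z1 3 0 + -(Z1 0 4 * Z2 3 0) = 0
          rw [hZ1su 3 0 (by decide), hZ2su 3 0 (by decide)]; ring
        · show Z2 0 4 * Z1 3 1 + -(Z1 0 4 * Z2 3 1) = 0
          rw [hZ1su 3 1 (by decide), hZ2su 3 1 (by decide)]; ring
        · show Z2 0 4 * Z1 3 2 + -(Z1 0 4 * Z2 3 2) = 0
          rw [hZ1su 3 2 (by decide), hZ2su 3 2 (by decide)]; ring
        · show Z2 0 4 * Z1 3 3 + -(Z1 0 4 * Z2 3 3) = 0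
          rw [hZ1su 3 3 (by decide), hZ2su 3 3 (by decide)]; ring
        · show Z2 0 4 * Z1 3 4 + -(Z1 0 4 * Z2 3 4) = 0
          rw [hz34, hy34]; ring
        · show Z2 0 4 * Z1 4 0 + -(Z1 0 4 * Z2 4 0) = 0
          rw [hZ1su 4 0 (by decide), hZ2su 4 0 (by decide)]; ring
        · show Z2 0 4 * Z1 4 1 + -(Z1 0 4 * Z2 4 1) = 0
          rw [hZ1su 4 1 (by decide), hZ2su 4 1 (by decide)]; ring
        · show Z2 0 4 * Z1 4 2 + -(Z1 0 4 * Z2 4 2) = 0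
          rw [hZ1su 4 2 (by decide), hZ2su 4 2 (by decide)]; ring
        · show Z2 0 4 * Z1 4 3 + -(Z1 0 4 * Z2 4 3) = 0
          rw [hZ1su 4 3 (by decide), hZ2su 4 3 (by decide)]; ring
        · show Z2 0 4 * Z1 4 4 + -(Z1 0 4 * Z2 4 4) = 0
          rw [hZ1su 4 4 (by decide), hZ2su 4 4 (by decide)]; ring
      obtain ⟨-, -, -, -, -, h5⟩ := hind _ _ _ _ _ _ hcombo
      exact hv (neg_eq_zero.mp h5)

set_option maxHeartbeats 2000000 in
lemma lemCore [CharZero k] (A B E C Z1 Z2 : M5 k)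
    (hA : SU A) (hB : SU B) (hE : SU E)
    (hC : C = A*B - B*A) (hZ1 : Z1 = A*C - C*A) (hZ2 : Z2 = B*C - C*B)
    (hAE : A*E - E*A = 0) (hBE : B*E - E*B = 0)
    (hAZ1 : A*Z1 - Z1*A = 0) (hBZ1 : B*Z1 - Z1*B = 0) (hEZ1 : E*Z1 - Z1*E = 0)
    (hAZ2 : A*Z2 - Z2*A = 0) (hBZ2 : B*Z2 - Z2*B = 0) (hEZ2 : E*Z2 - Z2*E = 0)
    (hind : ∀ q0 q1 q2 q3 q4 q5 : k,
      q0 • A + q1 • B + q2 • C + q3 • E + q4 • Z1 + q5 • Z2 = 0 →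
      q0 = 0 ∧ q1 = 0 ∧ q2 = 0 ∧ q3 = 0 ∧ q4 = 0 ∧ q5 = 0) : False := by
  have hCsu : SU C := hC ▸ su_comm hA hB
  have hZ1su : SU Z1 := hZ1 ▸ su_comm hA hCsu
  have hZ2su : SU Z2 := hZ2 ▸ su_comm hB hCsu
  have hc01 : C 0 1 = 0 := by rw [hC]; exact ce01 A B hA hB
  have hc12 : C 1 2 = 0 := by rw [hC]; exact ce12 A B hA hB
  have hc23 : C 2 3 = 0 := by rw [hC]; exact ce23 A B hA hB
  have hc34 : C 3 4 = 0 := by rw [hC]; exact ce34 A B hA hB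
  have hc02 : C 0 2 = A 0 1 * B 1 2 - B 0 1 * A 1 2 := by rw [hC]; exact ce02 A B hA hB
  have hc24 : C 2 4 = A 2 3 * B 3 4 - B 2 3 * A 3 4 := by rw [hC]; exact ce24 A B hA hB
  have hz01 : Z1 0 1 = 0 := by rw [hZ1]; exact ce01 A C hA hCsu
  have hz02 : Z1 0 2 = 0 := by rw [hZ1, ce02 A C hA hCsu, hc12, hc01]; ring
  have hz24 : Z1 2 4 = 0 := by rw [hZ1, ce24 A C hA hCsu, hc34, hc23]; ring
  have hz34 : Z1 3 4 = 0 := by rw [hZ1]; exact ce34 A C hA hCsu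
  have hy01 : Z2 0 1 = 0 := by rw [hZ2]; exact ce01 B C hB hCsu
  have hy02 : Z2 0 2 = 0 := by rw [hZ2, ce02 B C hB hCsu, hc12, hc01]; ring
  have hy24 : Z2 2 4 = 0 := by rw [hZ2, ce24 B C hB hCsu, hc34, hc23]; ring
  have hy34 : Z2 3 4 = 0 := by rw [hZ2]; exact ce34 B C hB hCsu
  have hu : Z1 0 3 = A 0 1 * C 1 3 - C 0 2 * A 2 3 := by
    rw [hZ1, ce03 A C hA hCsu, hc23, hc01]; ring
  have hpf : Z2 0 3 = B 0 1 * C 1 3 - C 0 2 * B 2 3 := by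
    rw [hZ2, ce03 B C hB hCsu, hc23, hc01]; ring
  have hqf : Z2 1 4 = B 1 2 * C 2 4 - C 1 3 * B 3 4 := by
    rw [hZ2, ce14 B C hB hCsu, hc34, hc12]; ring
  have hm13 : A 0 1 * Z1 1 4 - Z1 0 3 * A 3 4 = 0 := by
    have h := ce04 A Z1 hA hZ1su
    rw [hAZ1] at h
    simp only [Matrix.zero_apply] at h
    linear_combination -h - A 0 2 * hz24 - A 0 3 * hz34 + A 1 4 * hz01 + A 2 4 * hz02
  have hm14 : B 0 1 * Z1 1 4 - Z1 0 3 * B 3 4 = 0 := by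
    have h := ce04 B Z1 hB hZ1su
    rw [hBZ1] at h
    simp only [Matrix.zero_apply] at h
    linear_combination -h - B 0 2 * hz24 - B 0 3 * hz34 + B 1 4 * hz01 + B 2 4 * hz02
  have hmA2 : A 0 1 * Z2 1 4 - Z2 0 3 * A 3 4 = 0 := by
    have h := ce04 A Z2 hA hZ2su
    rw [hAZ2] at h
    simp only [Matrix.zero_apply] at h
    linear_combination -h - A 0 2 * hy24 - A 0 3 * hy34 + A 1 4 * hy01 + A 2 4 * hy02
  have hmB2 : B 0 1 * Z2 1 4 - Z2 0 3 * B 3 4 = 0 := by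
    have h := ce04 B Z2 hB hZ2su
    rw [hBZ2] at h
    simp only [Matrix.zero_apply] at h
    linear_combination -h - B 0 2 * hy24 - B 0 3 * hy34 + B 1 4 * hy01 + B 2 4 * hy02
  -- Lemma 0 : the leading parts of Z1 and Z2 are linearly dependent
  have hdet : Z1 0 3 * Z2 1 4 - Z1 1 4 * Z2 0 3 = 0 := by
    by_contra hdn
    have ha4 : A 3 4 = 0 := by
      have h : A 3 4 * (Z1 0 3 * Z2 1 4 - Z1 1 4 * Z2 0 3) = 0 := by
        linear_combination Z1 1 4 * hmA2 - Z2 1 4 * hm13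
      exact mulz h hdn
    have ha1 : A 0 1 = 0 := by
      have h : A 0 1 * (Z1 0 3 * Z2 1 4 - Z1 1 4 * Z2 0 3) = 0 := by
        linear_combination Z1 0 3 * hmA2 - Z2 0 3 * hm13
      exact mulz h hdn
    have hb4 : B 3 4 = 0 := by
      have h : B 3 4 * (Z1 0 3 * Z2 1 4 - Z1 1 4 * Z2 0 3) = 0 := by
        linear_combination Z1 1 4 * hmB2 - Z2 1 4 * hm14
      exact mulz h hdn
    have hb1 : B 0 1 = 0 := by
      have h : B 0 1 * (Z1 0 3 * Z2 1 4 - Z1 1 4 * Z2 0 3) = 0 := by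
        linear_combination Z1 0 3 * hmB2 - Z2 0 3 * hm14
      exact mulz h hdn
    have hC02 : C 0 2 = 0 := by rw [hc02, ha1, hb1]; ring
    have hC24 : C 2 4 = 0 := by rw [hc24, ha4, hb4]; ring
    have hu0 : Z1 0 3 = 0 := by rw [hu, ha1, hC02]; ring
    have hq0 : Z2 1 4 = 0 := by rw [hqf, hC24, hb4]; ring
    have hp0 : Z2 0 3 = 0 := by rw [hpf, hb1, hC02]; ring
    exact hdn (by rw [hu0, hq0, hp0]; ring)
  -- now reduce to lemS
  by_cases hpq : Z2 0 3 = 0 ∧ Z2 1 4 = 0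
  · exact lemS A B E C Z1 Z2 hA hB hE hC hZ1 hZ2 hAE hBE hAZ1 hBZ1 hEZ1 hpq.1 hpq.2 hind
  · by_cases huw : Z1 0 3 = 0 ∧ Z1 1 4 = 0
    · -- swap the roles of A and B
      refine lemS B A E (-C) (-Z2) (-Z1) hB hA hE ?_ ?_ ?_ hBE hAE ?_ ?_ ?_ ?_ ?_ ?_
      · rw [hC]; noncomm_ring
      · rw [hZ2, hC]; noncomm_ring
      · rw [hZ1, hC]; noncomm_ring
      · have h : B*(-Z2) - (-Z2)*B = -(B*Z2 - Z2*B) := by noncomm_ring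
        rw [h, hBZ2, neg_zero]
      · have h : A*(-Z2) - (-Z2)*A = -(A*Z2 - Z2*A) := by noncomm_ring
        rw [h, hAZ2, neg_zero]
      · have h : E*(-Z2) - (-Z2)*E = -(E*Z2 - Z2*E) := by noncomm_ring
        rw [h, hEZ2, neg_zero]
      · simp [Matrix.neg_apply, huw.1]
      · simp [Matrix.neg_apply, huw.2]
      · intro q0 q1 q2 q3 q4 q5 hcb
        have h2 : q1 • A + q0 • B + (-q2) • C + q3 • E + (-q5) • Z1 + (-q4) • Z2 = 0 := by
          rw [← hcb]; module
        obtain ⟨h1', h0', h2', h3', h5', h4'⟩ := hind q1 q0 (-q2) q3 (-q5) (-q4) h2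
        exact ⟨h0', h1', neg_eq_zero.mp h2', h3', neg_eq_zero.mp h4', neg_eq_zero.mp h5'⟩
    · -- generic case: replace B by A - θ • B
      obtain ⟨θ, hθ1, hθ2⟩ : ∃ θ : k, Z1 0 3 = θ * Z2 0 3 ∧ Z1 1 4 = θ * Z2 1 4 := by
        by_cases h0 : Z2 0 3 = 0
        · have hq0 : Z2 1 4 ≠ 0 := fun h => hpq ⟨h0, h⟩
          refine ⟨Z1 1 4 / Z2 1 4, ?_, by field_simp⟩
          rw [h0, mul_zero]
          have h2 : Z1 0 3 * Z2 1 4 = 0 := by linear_combination hdet + Z1 1 4 * h0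
          exact mulz h2 hq0
        · refine ⟨Z1 0 3 / Z2 0 3, by field_simp, ?_⟩
          field_simp
          linear_combination -hdet
      have hθn : θ ≠ 0 := by
        intro h0
        apply huw
        constructor
        · rw [hθ1, h0, zero_mul]
        · rw [hθ2, h0, zero_mul]
      refine lemS A (A - θ • B) E ((-θ) • C) ((-θ) • Z1) ((-θ) • Z1 + (θ*θ) • Z2)
        hA (su_sub hA (su_smul θ hB)) hE ?_ ?_ ?_ hAE (commz_sub hAE (commz_smul θ hBE)) ?_ ?_ ?_ ?_ ?_ ?_
      · rw [hC]
        simp only [mul_sub, sub_mul, mul_smul_comm, smul_mul_assoc, smul_smul]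
        module
      · rw [hZ1]
        simp only [mul_sub, sub_mul, mul_smul_comm, smul_mul_assoc, smul_smul]
        module
      · rw [hZ1, hZ2]
        simp only [mul_sub, sub_mul, mul_smul_comm, smul_mul_assoc, smul_smul]
        module
      · exact commz_smul_right (-θ) hAZ1
      · exact commz_sub (commz_smul_right (-θ) hAZ1)
          (commz_smul θ (commz_smul_right (-θ) hBZ1))
      · exact commz_smul_right (-θ) hEZ1
      · show ((-θ) • Z1 + (θ*θ) • Z2) 0 3 = 0
        simp only [Matrix.add_apply, Matrix.smul_apply, smul_eq_mul]
        rw [hθ1]; ring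
      · show ((-θ) • Z1 + (θ*θ) • Z2) 1 4 = 0
        simp only [Matrix.add_apply, Matrix.smul_apply, smul_eq_mul]
        rw [hθ2]; ring
      · intro q0 q1 q2 q3 q4 q5 hcb
        have h2 : (q0 + q1) • A + (-(θ*q1)) • B + (-(θ*q2)) • C + q3 • E
            + (-(θ*(q4+q5))) • Z1 + ((θ*θ)*q5) • Z2 = 0 := by
          rw [← hcb]; module
        obtain ⟨h0', h1', h2', h3', h4', h5'⟩ :=
          hind (q0+q1) (-(θ*q1)) (-(θ*q2)) q3 (-(θ*(q4+q5))) ((θ*θ)*q5) h2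
        have hq1 : q1 = 0 := by
          have := neg_eq_zero.mp h1'
          exact mulz' this hθn
        have hq0 : q0 = 0 := by linear_combination h0' - hq1
        have hq2 : q2 = 0 := mulz' (neg_eq_zero.mp h2') hθn
        have hq5 : q5 = 0 := by
          have := mulz' h5' (mul_ne_zero hθn hθn)
          exact this
        have hq45 : q4 + q5 = 0 := mulz' (neg_eq_zero.mp h4') hθn
        have hq4 : q4 = 0 := by linear_combination hq45 - hq5
        exact ⟨hq0, hq1, hq2, h3', hq4, hq5⟩

section Pad
variable {n : ℕ}

def pad (hn : n ≤ 5) (X : Matrix (Fin n) (Fin n) k) : M5 k :=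
  Matrix.of fun i j =>
    if hi : (i : ℕ) < n then if hj : (j : ℕ) < n then X ⟨i, hi⟩ ⟨j, hj⟩ else 0 else 0

lemma pad_apply_lt (hn : n ≤ 5) (X : Matrix (Fin n) (Fin n) k) (i j : Fin 5)
    (hi : (i : ℕ) < n) (hj : (j : ℕ) < n) : pad hn X i j = X ⟨i, hi⟩ ⟨j, hj⟩ := by
  simp [pad, hi, hj]

lemma pad_apply_right (hn : n ≤ 5) (X : Matrix (Fin n) (Fin n) k) (i j : Fin 5)
    (hj : ¬ (j : ℕ) < n) : pad hn X i j = 0 := by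
  simp [pad, hj]

lemma pad_apply_left (hn : n ≤ 5) (X : Matrix (Fin n) (Fin n) k) (i j : Fin 5)
    (hi : ¬ (i : ℕ) < n) : pad hn X i j = 0 := by
  simp [pad, hi]

lemma pad_add (hn : n ≤ 5) (X Y : Matrix (Fin n) (Fin n) k) :
    pad hn (X + Y) = pad hn X + pad hn Y := by
  ext i j
  simp only [pad, Matrix.of_apply, Matrix.add_apply]
  split_ifs <;> simp

lemma pad_smul (hn : n ≤ 5) (s : k) (X : Matrix (Fin n) (Fin n) k) :
    pad hn (s • X) = s • pad hn X := by
  ext i j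
  simp only [pad, Matrix.of_apply, Matrix.smul_apply]
  split_ifs <;> simp

lemma pad_sub (hn : n ≤ 5) (X Y : Matrix (Fin n) (Fin n) k) :
    pad hn (X - Y) = pad hn X - pad hn Y := by
  ext i j
  simp only [pad, Matrix.of_apply, Matrix.sub_apply]
  split_ifs <;> simp

lemma pad_zero (hn : n ≤ 5) : pad hn (0 : Matrix (Fin n) (Fin n) k) = 0 := by
  ext i j
  simp only [pad, Matrix.of_apply, Matrix.zero_apply]
  split_ifs <;> simp

lemma pad_inj (hn : n ≤ 5) (X : Matrix (Fin n) (Fin n) k) (h : pad hn X = 0) : X = 0 := by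
  ext i j
  have hi5 : (i : ℕ) < 5 := lt_of_lt_of_le i.2 hn
  have hj5 : (j : ℕ) < 5 := lt_of_lt_of_le j.2 hn
  have := congrFun (congrFun h ⟨i.1, hi5⟩) ⟨j.1, hj5⟩
  rw [pad_apply_lt hn X _ _ (by simpa using i.2) (by simpa using j.2)] at this
  simpa using this

lemma pad_su (hn : n ≤ 5) (X : Matrix (Fin n) (Fin n) k)
    (hX : ∀ i j : Fin n, j ≤ i → X i j = 0) : SU (pad hn X) := by
  intro i j hij
  by_cases hi : (i : ℕ) < n
  · by_cases hj : (j : ℕ) < n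
    · rw [pad_apply_lt hn X i j hi hj]
      exact hX _ _ hij
    · exact pad_apply_right hn X i j hj
  · exact pad_apply_left hn X i j hi

lemma pad_mul (hn : n ≤ 5) (X Y : Matrix (Fin n) (Fin n) k) :
    pad hn X * pad hn Y = pad hn (X * Y) := by
  ext i j
  rw [Matrix.mul_apply]
  by_cases hi : (i : ℕ) < n
  · by_cases hj : (j : ℕ) < n
    · rw [pad_apply_lt hn (X*Y) i j hi hj, Matrix.mul_apply]
      have key : ∑ l : Fin 5, pad hn X i l * pad hn Y l j
          = ∑ l ∈ Finset.univ.map (Fin.castLEEmb hn), pad hn X i l * pad hn Y l j := by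
        symm
        apply Finset.sum_subset (Finset.subset_univ _)
        intro l _ hl
        have hln : ¬ ((l : ℕ) < n) := by
          intro hln
          apply hl
          simp only [Finset.mem_map, Finset.mem_univ, true_and]
          exact ⟨⟨l.1, hln⟩, by ext; simp⟩
        rw [pad_apply_right hn X i l hln, zero_mul]
      rw [key, Finset.sum_map]
      apply Finset.sum_congr rfl
      intro l _
      have hl : ((Fin.castLEEmb hn l : Fin 5) : ℕ) < n := by simpa using l.2
      rw [pad_apply_lt hn X _ _ hi hl, pad_apply_lt hn Y _ _ hl hj]
      congr 1 <;> apply congrArg <;> ext <;> simp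
    · rw [pad_apply_right hn (X*Y) i j hj]
      apply Finset.sum_eq_zero
      intro l _
      rw [pad_apply_right hn Y l j hj, mul_zero]
  · rw [pad_apply_left hn (X*Y) i j hi]
    apply Finset.sum_eq_zero
    intro l _
    rw [pad_apply_left hn X i l hi, zero_mul]

lemma pad_comm (hn : n ≤ 5) (X Y Z : Matrix (Fin n) (Fin n) k)
    (h : X*Y - Y*X = Z) : pad hn X * pad hn Y - pad hn Y * pad hn X = pad hn Z := by
  rw [pad_mul, pad_mul, ← pad_sub, h]

end Pad

end L69aux


attribute [local instance 100] LieRing.ofAssociativeRing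

/-- The Lie algebra `n_n(k)` of strictly upper triangular `n × n` matrices over `k`. -/
def strictUpper (k : Type*) [Field k] (n : ℕ) :
    LieSubalgebra k (Matrix (Fin n) (Fin n) k) where
  carrier := {A | ∀ i j : Fin n, j ≤ i → A i j = 0}
  add_mem' := by
    intro A B hA hB i j hij
    simp [Matrix.add_apply, hA i j hij, hB i j hij]
  zero_mem' := by intro i j hij; simp
  smul_mem' := by
    intro c A hA i j hij
    simp [Matrix.smul_apply, hA i j hij]
  lie_mem' := by
    intro A B hA hB i j hij
    have key : ∀ (X Y : Matrix (Fin n) (Fin n) k),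
        (∀ i j : Fin n, j ≤ i → X i j = 0) → (∀ i j : Fin n, j ≤ i → Y i j = 0) →
        (X * Y) i j = 0 := by
      intro X Y hX hY
      rw [Matrix.mul_apply]
      apply Finset.sum_eq_zero
      intro l _
      by_cases h : l ≤ i
      · rw [hX i l h, zero_mul]
      · push_neg at h
        rw [hY l j (hij.trans h.le), mul_zero]
    have hbr : ⁅A, B⁆ = A * B - B * A := Ring.lie_def A B
    rw [hbr, Matrix.sub_apply, key A B hA hB, key B A hB hA, sub_zero]

/-- A basis of a Lie algebra realizing the bracket table of `L_{6,9} = L_{5,9} ⊕ k`: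
`[X1,X2] = X3`, `[X1,X3] = Z1`, `[X2,X3] = Z2`, all other brackets of basis vectors zero.
Here `X1, X2, X3, X4, Z1, Z2` are `b 0, b 1, b 2, b 3, b 4, b 5`. -/
def IsL69Basis {k L : Type*} [Field k] [LieRing L] [LieAlgebra k L]
    (b : Module.Basis (Fin 6) k L) : Prop :=
  ⁅b 0, b 1⁆ = b 2 ∧ ⁅b 0, b 2⁆ = b 4 ∧ ⁅b 1, b 2⁆ = b 5 ∧
  ⁅b 0, b 3⁆ = 0 ∧ ⁅b 0, b 4⁆ = 0 ∧ ⁅b 0, b 5⁆ = 0 ∧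
  ⁅b 1, b 3⁆ = 0 ∧ ⁅b 1, b 4⁆ = 0 ∧ ⁅b 1, b 5⁆ = 0 ∧
  ⁅b 2, b 3⁆ = 0 ∧ ⁅b 2, b 4⁆ = 0 ∧ ⁅b 2, b 5⁆ = 0 ∧
  ⁅b 3, b 4⁆ = 0 ∧ ⁅b 3, b 5⁆ = 0 ∧ ⁅b 4, b 5⁆ = 0

open L69aux in
set_option maxHeartbeats 1000000 in
/-- If a Lie subalgebra of the strictly upper triangular matrices `n_n(k)` is isomorphic to
`L_{6,9}` (i.e. admits a basis with the `L_{6,9}` bracket table), then `n ≥ 6`. -/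
theorem six_le_of_L69_subalgebra_strictUpper
    (k : Type*) [Field k] [CharZero k] (n : ℕ)
    (g : LieSubalgebra k (Matrix (Fin n) (Fin n) k)) (hg : g ≤ strictUpper k n)
    (b : Module.Basis (Fin 6) k g) (hb : IsL69Basis b) :
    6 ≤ n := by
  by_contra hcon
  push_neg at hcon
  have hn : n ≤ 5 := by omega
  obtain ⟨h1, h2, h3, h4, h5, h6, h7, h8, h9, h10, h11, h12, h13, h14, h15⟩ := hb
  -- the six matrices over Fin n
  set M := fun i => ((b i : g) : Matrix (Fin n) (Fin n) k) with hM
  have hsu : ∀ i : Fin 6, ∀ p q : Fin n, q ≤ p → M i p q = 0 := fun i => hg (b i).2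
  -- bracket relations at the matrix level
  have hbr : ∀ (x y z : g), ⁅x, y⁆ = z →
      (x : Matrix (Fin n) (Fin n) k) * y - (y : Matrix (Fin n) (Fin n) k) * x = z := by
    intro x y z h
    have := congrArg (Subtype.val) h
    rw [LieSubalgebra.coe_bracket] at this
    rw [← this, Ring.lie_def]
  have hbr0 : ∀ (x y : g), ⁅x, y⁆ = 0 →
      (x : Matrix (Fin n) (Fin n) k) * y - (y : Matrix (Fin n) (Fin n) k) * x = 0 := by
    intro x y h
    have h2 := hbr x y 0 h
    simpa using h2
  -- padded 5×5 matrices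
  apply lemCore (pad hn (M 0)) (pad hn (M 1)) (pad hn (M 3)) (pad hn (M 2))
    (pad hn (M 4)) (pad hn (M 5))
    (pad_su hn _ (hsu 0)) (pad_su hn _ (hsu 1)) (pad_su hn _ (hsu 3))
  · exact (pad_comm hn _ _ _ (hbr (b 0) (b 1) (b 2) h1)).symm
  · exact (pad_comm hn _ _ _ (hbr (b 0) (b 2) (b 4) h2)).symm
  · exact (pad_comm hn _ _ _ (hbr (b 1) (b 2) (b 5) h3)).symm
  · rw [pad_comm hn _ _ _ (hbr0 (b 0) (b 3) h4), pad_zero]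
  · rw [pad_comm hn _ _ _ (hbr0 (b 1) (b 3) h7), pad_zero]
  · rw [pad_comm hn _ _ _ (hbr0 (b 0) (b 4) h5), pad_zero]
  · rw [pad_comm hn _ _ _ (hbr0 (b 1) (b 4) h8), pad_zero]
  · rw [pad_comm hn _ _ _ (hbr0 (b 3) (b 4) h13), pad_zero]
  · rw [pad_comm hn _ _ _ (hbr0 (b 0) (b 5) h6), pad_zero]
  · rw [pad_comm hn _ _ _ (hbr0 (b 1) (b 5) h9), pad_zero]
  · rw [pad_comm hn _ _ _ (hbr0 (b 3) (b 5) h14), pad_zero]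
  · -- independence
    intro q0 q1 q2 q3 q4 q5 hcb
    have hpadsum : pad hn (q0 • M 0 + q1 • M 1 + q2 • M 2 + q3 • M 3 + q4 • M 4 + q5 • M 5) = 0 := by
      rw [pad_add, pad_add, pad_add, pad_add, pad_add,
        pad_smul, pad_smul, pad_smul, pad_smul, pad_smul, pad_smul]
      rw [← hcb]
    have hzero : q0 • M 0 + q1 • M 1 + q2 • M 2 + q3 • M 3 + q4 • M 4 + q5 • M 5 = 0 :=
      pad_inj hn _ hpadsum
    have hgsum : q0 • b 0 + q1 • b 1 + q2 • b 2 + q3 • b 3 + q4 • b 4 + q5 • b 5 = 0 := by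
      apply Subtype.ext
      push_cast
      exact hzero
    have hli := Fintype.linearIndependent_iff.mp b.linearIndependent
      ![q0, q1, q2, q3, q4, q5]
      (by
        rw [Fin.sum_univ_six]
        simpa using hgsum)
    exact ⟨hli 0, hli 1, hli 2, hli 3, hli 4, hli 5⟩
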